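/- The Nekrasov factor satisfies the transpose symmetry N_{λ,μ}(u; q₁, q₂) = N_{λ',μ'}(u; q₂, q₁), where λ', μ' are conjugate partitions. Consequently the level-0 instanton sum Z_inst(u; q₁, q₂ | z) is symmetric in q₁ and q₂: Z_inst(u; q₁, q₂ | z) = Z_inst(u; q₂, q₁ | z) as formal power series in z. -/

import Mathlib

open scoped BigOperators

/-- Arm length (as an integer, possibly negative) of the box `s` with respect to the
Young diagram `μ`: `a_μ(s) = μ_{s₁} − s₂ − 1` in 0-indexed conventions. -/
def armZ (μ : YoungDiagram) (s : ℕ × ℕ) : ℤ := (μ.rowLen s.1 : ℤ) - s.2 - 1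

/-- Leg length (as an integer, possibly negative) of the box `s` with respect to the
Young diagram `μ`. -/
def legZ (μ : YoungDiagram) (s : ℕ × ℕ) : ℤ := (μ.colLen s.2 : ℤ) - s.1 - 1

/-- The Nekrasov factor
`N_{λ,μ}(u; q₁, q₂) = ∏_{s∈λ}(1 − u·q₂^{−a_μ(s)−1}·q₁^{l_λ(s)}) ·
∏_{s∈μ}(1 − u·q₂^{a_λ(s)}·q₁^{−l_μ(s)−1})`. -/
noncomputable def nekrasovFactor (u q₁ q₂ : ℂ) (lam mu : YoungDiagram) : ℂ :=
  (∏ s ∈ lam.cells, (1 - u * q₂ ^ (-armZ mu s - 1) * q₁ ^ legZ lam s)) *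
    ∏ s ∈ mu.cells, (1 - u * q₂ ^ armZ lam s * q₁ ^ (-legZ mu s - 1))

/-- The coefficient of `z^N` in the level-0 instanton sum
`Z_inst(u; q₁, q₂ | z) = ∑_{λ⁽¹⁾,λ⁽²⁾} (q₁⁻¹q₂⁻¹z)^{|λ⁽¹⁾|+|λ⁽²⁾|} /
∏_{i,j=1}^2 N_{λ⁽ⁱ⁾,λ⁽ʲ⁾}(u_i/u_j; q₁, q₂)` (with `u₁u₂ = 1`, `u = u₁/u₂`),
viewed as a formal power series in `z`.  Only finitely many pairs of partitions
contribute to each coefficient. -/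
noncomputable def zInstCoeff (u q₁ q₂ : ℂ) (N : ℕ) : ℂ :=
  ∑' P : YoungDiagram × YoungDiagram,
    if P.1.card + P.2.card = N then
      (q₁⁻¹ * q₂⁻¹) ^ N /
        (nekrasovFactor 1 q₁ q₂ P.1 P.1 * nekrasovFactor u q₁ q₂ P.1 P.2 *
          nekrasovFactor u⁻¹ q₁ q₂ P.2 P.1 * nekrasovFactor 1 q₁ q₂ P.2 P.2)
    else 0

namespace ZInstAux

open YoungDiagram Finset

/-! ### basic membership facts -/

lemma mem_iff_row {μ : YoungDiagram} {s : ℕ × ℕ} : s ∈ μ ↔ s.2 < μ.rowLen s.1 := by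
  obtain ⟨i, j⟩ := s; exact YoungDiagram.mem_iff_lt_rowLen

lemma mem_iff_col {μ : YoungDiagram} {s : ℕ × ℕ} : s ∈ μ ↔ s.1 < μ.colLen s.2 := by
  obtain ⟨i, j⟩ := s; exact YoungDiagram.mem_iff_lt_colLen

lemma mem_col0 {μ : YoungDiagram} {s : ℕ × ℕ} (h : s ∈ μ) : s.1 < μ.colLen 0 := by
  have h0 : (s.1, 0) ∈ μ := μ.up_left_mem le_rfl (Nat.zero_le s.2) (by rwa [Prod.mk.eta])
  exact YoungDiagram.mem_iff_lt_colLen.mp h0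

lemma rowLen_colLen_le (μ : YoungDiagram) (j : ℕ) : μ.rowLen (μ.colLen j) ≤ j := by
  by_contra h
  push_neg at h
  have : (μ.colLen j, j) ∈ μ := YoungDiagram.mem_iff_lt_rowLen.mpr h
  exact absurd (YoungDiagram.mem_iff_lt_colLen.mp this) (lt_irrefl _)

lemma armZ_nonneg_iff {μ : YoungDiagram} {s : ℕ × ℕ} : 0 ≤ armZ μ s ↔ s ∈ μ := by
  rw [armZ, mem_iff_row]; omega

lemma legZ_nonneg_iff {μ : YoungDiagram} {s : ℕ × ℕ} : 0 ≤ legZ μ s ↔ s ∈ μ := by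
  rw [legZ, mem_iff_col]; omega

lemma armZ_transpose (μ : YoungDiagram) (s : ℕ × ℕ) :
    armZ μ.transpose s.swap = legZ μ s := by
  simp [armZ, legZ, YoungDiagram.rowLen_transpose]

lemma legZ_transpose (μ : YoungDiagram) (s : ℕ × ℕ) :
    legZ μ.transpose s.swap = armZ μ s := by
  simp [armZ, legZ, YoungDiagram.colLen_transpose]

lemma transpose_cells_val (μ : YoungDiagram) :
    μ.transpose.cells.val = μ.cells.val.map Prod.swap := by
  have h : μ.transpose.cells = μ.cells.map ⟨Prod.swap, Prod.swap_injective⟩ := by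
    ext s
    simp only [YoungDiagram.mem_cells, YoungDiagram.mem_transpose, Finset.mem_map,
      Function.Embedding.coeFn_mk]
    constructor
    · intro h; exact ⟨s.swap, h, Prod.swap_swap s⟩
    · rintro ⟨a, ha, rfl⟩; rwa [Prod.swap_swap]
  rw [h, Finset.map_val]
  rfl

/-! ### the counting machinery -/

/-- boxes of `lam` in the quadrant shifted by `(p,q)` that avoid the shifted copy of `mu` -/
def phiSet (lam mu : YoungDiagram) (p q : ℕ) : Finset (ℕ × ℕ) :=
  lam.cells.filter fun s => p ≤ s.1 ∧ q ≤ s.2 ∧ (s.1 - p, s.2 - q) ∉ mu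

def fSet (lam mu : YoungDiagram) (p q : ℕ) : Finset ℕ :=
  (Finset.range (lam.colLen 0)).filter fun k => mu.rowLen k + q < lam.rowLen (k + p)

def dSet (lam mu : YoungDiagram) (p q : ℕ) : Finset (ℕ × ℕ) :=
  lam.cells.filter fun s => lam.rowLen s.1 = s.2 + q + 1 ∧ s.1 = mu.colLen s.2 + p

lemma mem_phiSet {lam mu : YoungDiagram} {p q : ℕ} {s : ℕ × ℕ} :
    s ∈ phiSet lam mu p q ↔
      s.2 < lam.rowLen s.1 ∧ p ≤ s.1 ∧ q ≤ s.2 ∧ mu.rowLen (s.1 - p) ≤ s.2 - q := by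
  rw [phiSet, Finset.mem_filter, YoungDiagram.mem_cells, mem_iff_row,
    YoungDiagram.mem_iff_lt_rowLen, not_lt]

lemma mem_fSet {lam mu : YoungDiagram} {p q : ℕ} {k : ℕ} :
    k ∈ fSet lam mu p q ↔ k < lam.colLen 0 ∧ mu.rowLen k + q < lam.rowLen (k + p) := by
  simp [fSet]

lemma mem_dSet {lam mu : YoungDiagram} {p q : ℕ} {s : ℕ × ℕ} :
    s ∈ dSet lam mu p q ↔
      s.2 < lam.rowLen s.1 ∧ lam.rowLen s.1 = s.2 + q + 1 ∧ s.1 = mu.colLen s.2 + p := by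
  simp [dSet, YoungDiagram.mem_cells, mem_iff_row, and_assoc]

lemma phiSet_transpose (lam mu : YoungDiagram) (p q : ℕ) :
    (phiSet lam mu p q).card = (phiSet lam.transpose mu.transpose q p).card := by
  apply Finset.card_nbij' Prod.swap Prod.swap
  · intro s hs
    rw [phiSet, Finset.mem_coe, Finset.mem_filter, YoungDiagram.mem_cells] at hs ⊢
    obtain ⟨hmem, hp, hq, hnot⟩ := hs
    refine ⟨?_, hq, hp, ?_⟩
    · rw [YoungDiagram.mem_transpose, Prod.swap_swap]; exact hmem
    · rw [YoungDiagram.mem_transpose]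
      simpa using hnot
  · intro s hs
    rw [phiSet, Finset.mem_coe, Finset.mem_filter, YoungDiagram.mem_cells] at hs ⊢
    obtain ⟨hmem, hq, hp, hnot⟩ := hs
    rw [YoungDiagram.mem_transpose] at hmem hnot
    refine ⟨hmem, hp, hq, ?_⟩
    simpa using hnot
  · intro s _; exact Prod.swap_swap s
  · intro s _; exact Prod.swap_swap s

lemma phi_succ (lam mu : YoungDiagram) (p q : ℕ) :
    (phiSet lam mu p q).card =
      (phiSet lam mu p (q + 1)).card + (fSet lam mu p q).card := by
  classical
  have hsplit := Finset.card_filter_add_card_filter_not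
    (s := phiSet lam mu p q)
    (p := fun s => q + 1 ≤ s.2 ∧ mu.rowLen (s.1 - p) ≤ s.2 - (q + 1))
  have h1 : (phiSet lam mu p q).filter
      (fun s => q + 1 ≤ s.2 ∧ mu.rowLen (s.1 - p) ≤ s.2 - (q + 1)) =
      phiSet lam mu p (q + 1) := by
    ext s
    rw [Finset.mem_filter, mem_phiSet, mem_phiSet]
    omega
  have h2 : ((phiSet lam mu p q).filter
      (fun s => ¬(q + 1 ≤ s.2 ∧ mu.rowLen (s.1 - p) ≤ s.2 - (q + 1)))).card =
      (fSet lam mu p q).card := by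
    apply Finset.card_nbij' (fun s => s.1 - p) (fun k => (k + p, mu.rowLen k + q))
    · intro s hs
      rw [Finset.mem_coe, Finset.mem_filter, mem_phiSet] at hs
      beta_reduce
      rw [Finset.mem_coe, mem_fSet]
      obtain ⟨⟨hrow, hp, hq, hR⟩, hnot⟩ := hs
      have hj : s.2 = mu.rowLen (s.1 - p) + q := by omega
      have hip : s.1 - p + p = s.1 := by omega
      constructor
      · have : (s.1, s.2) ∈ lam := mem_iff_row.mpr hrow
        have := mem_col0 (by rwa [Prod.mk.eta] at this)
        omega
      · rw [hip]; omega
    · intro k hk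
      rw [Finset.mem_coe, mem_fSet] at hk
      beta_reduce
      rw [Finset.mem_coe, Finset.mem_filter, mem_phiSet]
      have hkp : k + p - p = k := by omega
      refine ⟨⟨by simpa using hk.2, by omega, by omega, by rw [hkp]; omega⟩, ?_⟩
      rw [hkp]
      omega
    · intro s hs
      rw [Finset.mem_coe, Finset.mem_filter, mem_phiSet] at hs
      obtain ⟨⟨hrow, hp, hq, hR⟩, hnot⟩ := hs
      have hj : s.2 = mu.rowLen (s.1 - p) + q := by omega
      have hip : s.1 - p + p = s.1 := by omega
      ext
      · simpa using hip
      · simpa using hj.symm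
    · intro k hk
      simp
  rw [h1] at hsplit
  omega

lemma f_succ (lam mu : YoungDiagram) (p q : ℕ) :
    (fSet lam mu p q).card =
      (fSet lam mu (p + 1) q).card + (dSet lam mu p q).card := by
  classical
  have hsplit := Finset.card_filter_add_card_filter_not
    (s := fSet lam mu p q)
    (p := fun k => 1 ≤ k ∧ mu.rowLen (k - 1) + q < lam.rowLen (k + p))
  have h1 : ((fSet lam mu p q).filter
      (fun k => 1 ≤ k ∧ mu.rowLen (k - 1) + q < lam.rowLen (k + p))).card =
      (fSet lam mu (p + 1) q).card := by
    apply Finset.card_nbij' (fun k => k - 1) (fun k => k + 1)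
    · intro k hk
      rw [Finset.mem_coe, Finset.mem_filter, mem_fSet] at hk
      beta_reduce
      rw [Finset.mem_coe, mem_fSet]
      obtain ⟨⟨hklt, _⟩, hk1, hlt⟩ := hk
      have h : k - 1 + (p + 1) = k + p := by omega
      rw [h]
      exact ⟨by omega, hlt⟩
    · intro k hk
      rw [Finset.mem_coe, mem_fSet] at hk
      beta_reduce
      rw [Finset.mem_coe, Finset.mem_filter, mem_fSet]
      obtain ⟨_, hlt⟩ := hk
      have h : k + 1 + p = k + (p + 1) := by omega
      have hmono := mu.rowLen_anti k (k + 1) (by omega)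
      have hpos : 0 < lam.rowLen (k + (p + 1)) := by omega
      have hmem : (k + (p + 1), 0) ∈ lam := YoungDiagram.mem_iff_lt_rowLen.mpr hpos
      have hcol := mem_col0 hmem
      refine ⟨⟨by simp at hcol ⊢; omega, by rw [h]; omega⟩, by omega, by rw [show k + 1 - 1 = k by omega, h]; exact hlt⟩
    · intro k hk
      rw [Finset.mem_coe, Finset.mem_filter] at hk
      beta_reduce
      omega
    · intro k hk
      beta_reduce
      omega
  have h2 : ((fSet lam mu p q).filter
      (fun k => ¬(1 ≤ k ∧ mu.rowLen (k - 1) + q < lam.rowLen (k + p)))).card =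
      (dSet lam mu p q).card := by
    apply Finset.card_nbij' (fun k => (k + p, lam.rowLen (k + p) - (q + 1)))
      (fun s => s.1 - p)
    · intro k hk
      rw [Finset.mem_coe, Finset.mem_filter, mem_fSet] at hk
      obtain ⟨⟨hklt, hlt⟩, hnot⟩ := hk
      beta_reduce
      rw [Finset.mem_coe, mem_dSet]
      set r := lam.rowLen (k + p) with hr
      have hrq : q + 1 ≤ r := by omega
      refine ⟨by simp; omega, by simp; omega, ?_⟩
      -- mu.colLen (r - (q+1)) = k
      have hle : mu.colLen (r - (q + 1)) ≤ k := by
        have hnotmem : (k, r - (q + 1)) ∉ mu := by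
          rw [YoungDiagram.mem_iff_lt_rowLen]
          omega
        rw [YoungDiagram.mem_iff_lt_colLen] at hnotmem
        omega
      have hge : k ≤ mu.colLen (r - (q + 1)) := by
        rcases Nat.eq_zero_or_pos k with hk0 | hk1
        · omega
        · have hbig : r ≤ mu.rowLen (k - 1) + q := by
            by_contra hc
            push_neg at hc
            exact hnot ⟨hk1, hc⟩
          have hmem : (k - 1, r - (q + 1)) ∈ mu := by
            rw [YoungDiagram.mem_iff_lt_rowLen]
            omega
          rw [YoungDiagram.mem_iff_lt_colLen] at hmem
          omega
      simp only
      omega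
    · intro s hs
      rw [Finset.mem_coe, mem_dSet] at hs
      obtain ⟨hrow, harm, hcl⟩ := hs
      beta_reduce
      rw [Finset.mem_coe, Finset.mem_filter, mem_fSet]
      have hip : s.1 - p + p = s.1 := by omega
      have hmem : (s.1, s.2) ∈ lam := mem_iff_row.mpr hrow
      have hcol0 := mem_col0 (by rwa [Prod.mk.eta] at hmem)
      have hrc := rowLen_colLen_le mu s.2
      have hkcl : s.1 - p = mu.colLen s.2 := by omega
      refine ⟨⟨by omega, by rw [hip, hkcl]; omega⟩, ?_⟩
      rintro ⟨hk1, hlt⟩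
      rw [hip] at hlt
      have hmem2 : (s.1 - p - 1, s.2) ∈ mu := by
        rw [YoungDiagram.mem_iff_lt_colLen]
        omega
      rw [YoungDiagram.mem_iff_lt_rowLen] at hmem2
      have : s.1 - p - 1 = s.1 - p - 1 := rfl
      omega
    · intro k hk
      rw [Finset.mem_coe, Finset.mem_filter, mem_fSet] at hk
      simp only
      omega
    · intro s hs
      rw [Finset.mem_coe, mem_dSet] at hs
      obtain ⟨hrow, harm, hcl⟩ := hs
      have hip : s.1 - p + p = s.1 := by omega
      ext
      · simpa using hip
      · simp only [hip]
        omega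
  omega

/-- The main combinatorial lemma: the `D`-count is transpose-symmetric. -/
lemma dSet_symm (lam mu : YoungDiagram) (p q : ℕ) :
    (dSet lam mu p q).card = (dSet lam.transpose mu.transpose q p).card := by
  have A := phi_succ lam mu p q
  have B := f_succ lam mu p q
  have C := phi_succ lam mu (p + 1) q
  have A' := phi_succ lam.transpose mu.transpose q p
  have B' := f_succ lam.transpose mu.transpose q p
  have C' := phi_succ lam.transpose mu.transpose (q + 1) p
  have T1 := phiSet_transpose lam mu p q
  have T2 := phiSet_transpose lam mu p (q + 1)
  have T3 := phiSet_transpose lam mu (p + 1) q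
  have T4 := phiSet_transpose lam mu (p + 1) (q + 1)
  omega

/-- The hard case of the count identity. -/
lemma hard (lam mu : YoungDiagram) (x y : ℕ) :
    (lam.cells.filter fun s => legZ lam s = (x : ℤ) ∧ armZ mu s = -(y : ℤ) - 1).card =
    (lam.cells.filter fun s => armZ lam s = (y : ℤ) ∧ legZ mu s = -(x : ℤ) - 1).card := by
  classical
  have hR : (lam.cells.filter fun s => armZ lam s = (y : ℤ) ∧ legZ mu s = -(x : ℤ) - 1) =
      dSet lam mu x y := by
    ext s
    rw [Finset.mem_filter, mem_dSet, YoungDiagram.mem_cells, mem_iff_row, armZ, legZ]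
    omega
  have hL : (lam.cells.filter fun s => legZ lam s = (x : ℤ) ∧ armZ mu s = -(y : ℤ) - 1).card =
      (dSet lam.transpose mu.transpose y x).card := by
    apply Finset.card_nbij' Prod.swap Prod.swap
    · intro s hs
      rw [Finset.mem_coe, Finset.mem_filter, YoungDiagram.mem_cells] at hs
      obtain ⟨hmem, hleg, harm⟩ := hs
      rw [legZ] at hleg
      rw [armZ] at harm
      rw [Finset.mem_coe, mem_dSet, YoungDiagram.rowLen_transpose, YoungDiagram.colLen_transpose]
      have hcol : s.1 < lam.colLen s.2 := mem_iff_col.mp hmem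
      simp only [Prod.fst_swap, Prod.snd_swap]
      omega
    · intro s hs
      rw [Finset.mem_coe, mem_dSet, YoungDiagram.rowLen_transpose, YoungDiagram.colLen_transpose] at hs
      obtain ⟨hrow, harm, hleg⟩ := hs
      rw [Finset.mem_coe, Finset.mem_filter, YoungDiagram.mem_cells]
      have hmem : s.swap ∈ lam := by
        rw [mem_iff_col]
        simp only [Prod.fst_swap, Prod.snd_swap]
        omega
      refine ⟨hmem, ?_, ?_⟩
      · rw [legZ]
        simp only [Prod.fst_swap, Prod.snd_swap]
        omega
      · rw [armZ]
        simp only [Prod.fst_swap, Prod.snd_swap]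
        omega
    · intro s _; exact Prod.swap_swap s
    · intro s _; exact Prod.swap_swap s
  rw [hL, hR, dSet_symm lam.transpose mu.transpose y x,
    YoungDiagram.transpose_transpose, YoungDiagram.transpose_transpose]

/-- exponent labels for the first kind of factor -/
def Ft (lam mu : YoungDiagram) (s : ℕ × ℕ) : ℤ × ℤ := (legZ lam s, -armZ mu s - 1)

/-- exponent labels for the second kind of factor -/
def Gt (lam mu : YoungDiagram) (s : ℕ × ℕ) : ℤ × ℤ := (-legZ mu s - 1, armZ lam s)

lemma key (lam mu : YoungDiagram) (a : ℤ × ℤ) :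
    (lam.cells.filter fun s => a = Ft lam mu s).card +
      (mu.cells.filter fun s => a = Gt lam mu s).card =
    (lam.cells.filter fun s => a = Gt lam mu s).card +
      (mu.cells.filter fun s => a = Ft lam mu s).card := by
  classical
  obtain ⟨x, y⟩ := a
  have hFt : ∀ s, ((x, y) = Ft lam mu s) ↔ (legZ lam s = x ∧ armZ mu s = -y - 1) := by
    intro s; rw [Ft, Prod.ext_iff]; constructor <;> (intro h; constructor <;> omega)
  have hGt : ∀ s, ((x, y) = Gt lam mu s) ↔ (legZ mu s = -x - 1 ∧ armZ lam s = y) := by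
    intro s; rw [Gt, Prod.ext_iff]; constructor <;> (intro h; constructor <;> omega)
  rcases le_or_gt 0 x with hx | hx <;> rcases le_or_gt 0 y with hy | hy
  · -- x ≥ 0, y ≥ 0 : hard case on lam, the mu-counts vanish
    have h2 : (mu.cells.filter fun s => (x, y) = Gt lam mu s) = ∅ := by
      apply Finset.filter_false_of_mem
      intro s hs
      rw [hGt]
      have := legZ_nonneg_iff.mpr ((YoungDiagram.mem_cells _).mp hs)
      omega
    have h4 : (mu.cells.filter fun s => (x, y) = Ft lam mu s) = ∅ := by
      apply Finset.filter_false_of_mem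
      intro s hs
      rw [hFt]
      have := armZ_nonneg_iff.mpr ((YoungDiagram.mem_cells _).mp hs)
      omega
    have h13 : (lam.cells.filter fun s => (x, y) = Ft lam mu s).card =
        (lam.cells.filter fun s => (x, y) = Gt lam mu s).card := by
      obtain ⟨x', rfl⟩ : ∃ n : ℕ, x = (n : ℤ) := ⟨x.toNat, (Int.toNat_of_nonneg hx).symm⟩
      obtain ⟨y', rfl⟩ : ∃ n : ℕ, y = (n : ℤ) := ⟨y.toNat, (Int.toNat_of_nonneg hy).symm⟩
      have e1 : (lam.cells.filter fun s => ((x' : ℤ), (y' : ℤ)) = Ft lam mu s) =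
          (lam.cells.filter fun s => legZ lam s = (x' : ℤ) ∧ armZ mu s = -(y' : ℤ) - 1) := by
        ext s; rw [Finset.mem_filter, Finset.mem_filter, hFt]
      have e2 : (lam.cells.filter fun s => ((x' : ℤ), (y' : ℤ)) = Gt lam mu s) =
          (lam.cells.filter fun s => armZ lam s = (y' : ℤ) ∧ legZ mu s = -(x' : ℤ) - 1) := by
        ext s; rw [Finset.mem_filter, Finset.mem_filter, hGt]; tauto
      rw [e1, e2]
      exact hard lam mu x' y'
    rw [h2, h4, h13]
  · -- x ≥ 0, y < 0 : both sides count lam ∩ mu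
    have h2 : (mu.cells.filter fun s => (x, y) = Gt lam mu s) = ∅ := by
      apply Finset.filter_false_of_mem
      intro s hs
      rw [hGt]
      have := legZ_nonneg_iff.mpr ((YoungDiagram.mem_cells _).mp hs)
      omega
    have h3 : (lam.cells.filter fun s => (x, y) = Gt lam mu s) = ∅ := by
      apply Finset.filter_false_of_mem
      intro s hs
      rw [hGt]
      have := armZ_nonneg_iff.mpr ((YoungDiagram.mem_cells _).mp hs)
      omega
    have h14 : (lam.cells.filter fun s => (x, y) = Ft lam mu s) =
        (mu.cells.filter fun s => (x, y) = Ft lam mu s) := by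
      ext s
      rw [Finset.mem_filter, Finset.mem_filter, YoungDiagram.mem_cells,
        YoungDiagram.mem_cells]
      constructor
      · rintro ⟨hmem, hp⟩
        refine ⟨?_, hp⟩
        rw [hFt] at hp
        rw [← armZ_nonneg_iff]
        omega
      · rintro ⟨hmem, hp⟩
        refine ⟨?_, hp⟩
        rw [hFt] at hp
        rw [← legZ_nonneg_iff]
        omega
    rw [h2, h3, h14]
    exact add_comm _ _
  · -- x < 0, y ≥ 0 : both sides count lam ∩ mu
    have h1 : (lam.cells.filter fun s => (x, y) = Ft lam mu s) = ∅ := by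
      apply Finset.filter_false_of_mem
      intro s hs
      rw [hFt]
      have := legZ_nonneg_iff.mpr ((YoungDiagram.mem_cells _).mp hs)
      omega
    have h4 : (mu.cells.filter fun s => (x, y) = Ft lam mu s) = ∅ := by
      apply Finset.filter_false_of_mem
      intro s hs
      rw [hFt]
      have := armZ_nonneg_iff.mpr ((YoungDiagram.mem_cells _).mp hs)
      omega
    have h23 : (lam.cells.filter fun s => (x, y) = Gt lam mu s) =
        (mu.cells.filter fun s => (x, y) = Gt lam mu s) := by
      ext s
      rw [Finset.mem_filter, Finset.mem_filter, YoungDiagram.mem_cells,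
        YoungDiagram.mem_cells]
      constructor
      · rintro ⟨hmem, hp⟩
        refine ⟨?_, hp⟩
        rw [hGt] at hp
        rw [← legZ_nonneg_iff]
        omega
      · rintro ⟨hmem, hp⟩
        refine ⟨?_, hp⟩
        rw [hGt] at hp
        rw [← armZ_nonneg_iff]
        omega
    rw [h1, h4, h23]
    exact add_comm _ _
  · -- x < 0, y < 0 : hard case on mu
    have h1 : (lam.cells.filter fun s => (x, y) = Ft lam mu s) = ∅ := by
      apply Finset.filter_false_of_mem
      intro s hs
      rw [hFt]
      have := legZ_nonneg_iff.mpr ((YoungDiagram.mem_cells _).mp hs)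
      omega
    have h3 : (lam.cells.filter fun s => (x, y) = Gt lam mu s) = ∅ := by
      apply Finset.filter_false_of_mem
      intro s hs
      rw [hGt]
      have := armZ_nonneg_iff.mpr ((YoungDiagram.mem_cells _).mp hs)
      omega
    have h24 : (mu.cells.filter fun s => (x, y) = Gt lam mu s).card =
        (mu.cells.filter fun s => (x, y) = Ft lam mu s).card := by
      obtain ⟨x', hx'⟩ : ∃ n : ℕ, x = -(n : ℤ) - 1 :=
        ⟨(-x - 1).toNat, by omega⟩
      obtain ⟨y', hy'⟩ : ∃ n : ℕ, y = -(n : ℤ) - 1 :=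
        ⟨(-y - 1).toNat, by omega⟩
      subst hx' hy'
      have e1 : (mu.cells.filter fun s => (-(x' : ℤ) - 1, -(y' : ℤ) - 1) = Gt lam mu s) =
          (mu.cells.filter fun s => legZ mu s = (x' : ℤ) ∧ armZ lam s = -(y' : ℤ) - 1) := by
        ext s; rw [Finset.mem_filter, Finset.mem_filter, hGt]
        constructor <;> (rintro ⟨h, h1', h2'⟩; exact ⟨h, by omega, by omega⟩)
      have e2 : (mu.cells.filter fun s => (-(x' : ℤ) - 1, -(y' : ℤ) - 1) = Ft lam mu s) =
          (mu.cells.filter fun s => armZ mu s = (y' : ℤ) ∧ legZ lam s = -(x' : ℤ) - 1) := by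
        ext s; rw [Finset.mem_filter, Finset.mem_filter, hFt]
        constructor <;> (rintro ⟨h, h1', h2'⟩; exact ⟨h, by omega, by omega⟩)
      rw [e1, e2]
      exact hard mu lam x' y'
    rw [h1, h3, h24]

/-- the multiset of exponent pairs is symmetric -/
lemma cells_multiset_eq (lam mu : YoungDiagram) :
    lam.cells.val.map (Ft lam mu) + mu.cells.val.map (Gt lam mu) =
      lam.cells.val.map (Gt lam mu) + mu.cells.val.map (Ft lam mu) := by
  classical
  rw [Multiset.ext]
  intro a
  rw [Multiset.count_add, Multiset.count_add, Multiset.count_map, Multiset.count_map,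
    Multiset.count_map, Multiset.count_map]
  have h := key lam mu a
  simpa [Finset.card, Finset.filter] using h

lemma nek_eq (u q₁ q₂ : ℂ) (lam mu : YoungDiagram) :
    nekrasovFactor u q₁ q₂ lam mu =
      ((lam.cells.val.map (Ft lam mu) + mu.cells.val.map (Gt lam mu)).map
        (fun xy : ℤ × ℤ => 1 - u * q₁ ^ xy.1 * q₂ ^ xy.2)).prod := by
  rw [nekrasovFactor, Multiset.map_add, Multiset.prod_add, Multiset.map_map,
    Multiset.map_map]
  congr 1
  · rw [Finset.prod_eq_multiset_prod]
    congr 1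
    apply Multiset.map_congr rfl
    intro s _
    simp only [Function.comp_apply, Ft]
    ring
  · rw [Finset.prod_eq_multiset_prod]
    congr 1
    apply Multiset.map_congr rfl
    intro s _
    simp only [Function.comp_apply, Gt]
    ring

/-- Part 1: the Nekrasov factor transpose symmetry. -/
lemma nek_transpose (u q₁ q₂ : ℂ) (lam mu : YoungDiagram) :
    nekrasovFactor u q₁ q₂ lam mu =
      nekrasovFactor u q₂ q₁ lam.transpose mu.transpose := by
  rw [nek_eq u q₁ q₂ lam mu, nek_eq u q₂ q₁ lam.transpose mu.transpose]
  rw [transpose_cells_val lam, transpose_cells_val mu]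
  simp only [Multiset.map_add, Multiset.map_map]
  have hA : ∀ s : ℕ × ℕ,
      ((fun xy : ℤ × ℤ => 1 - u * q₂ ^ xy.1 * q₁ ^ xy.2) ∘
        (Ft lam.transpose mu.transpose ∘ Prod.swap)) s =
      ((fun xy : ℤ × ℤ => 1 - u * q₁ ^ xy.1 * q₂ ^ xy.2) ∘ Gt lam mu) s := by
    intro s
    simp only [Function.comp_apply, Ft, Gt]
    have h1 : legZ lam.transpose s.swap = armZ lam s := legZ_transpose lam s
    have h2 : armZ mu.transpose s.swap = legZ mu s := armZ_transpose mu s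
    rw [h1, h2]
    ring
  have hB : ∀ s : ℕ × ℕ,
      ((fun xy : ℤ × ℤ => 1 - u * q₂ ^ xy.1 * q₁ ^ xy.2) ∘
        (Gt lam.transpose mu.transpose ∘ Prod.swap)) s =
      ((fun xy : ℤ × ℤ => 1 - u * q₁ ^ xy.1 * q₂ ^ xy.2) ∘ Ft lam mu) s := by
    intro s
    simp only [Function.comp_apply, Ft, Gt]
    have h1 : legZ mu.transpose s.swap = armZ mu s := legZ_transpose mu s
    have h2 : armZ lam.transpose s.swap = legZ lam s := armZ_transpose lam s
    rw [h1, h2]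
    ring
  have eA : lam.cells.val.map
      ((fun xy : ℤ × ℤ => 1 - u * q₂ ^ xy.1 * q₁ ^ xy.2) ∘
        (Ft lam.transpose mu.transpose ∘ Prod.swap)) =
      lam.cells.val.map ((fun xy : ℤ × ℤ => 1 - u * q₁ ^ xy.1 * q₂ ^ xy.2) ∘ Gt lam mu) :=
    Multiset.map_congr rfl (fun s _ => hA s)
  have eB : mu.cells.val.map
      ((fun xy : ℤ × ℤ => 1 - u * q₂ ^ xy.1 * q₁ ^ xy.2) ∘
        (Gt lam.transpose mu.transpose ∘ Prod.swap)) =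
      mu.cells.val.map ((fun xy : ℤ × ℤ => 1 - u * q₁ ^ xy.1 * q₂ ^ xy.2) ∘ Ft lam mu) :=
    Multiset.map_congr rfl (fun s _ => hB s)
  rw [eA, eB, ← Multiset.map_map, ← Multiset.map_map, ← Multiset.map_map, ← Multiset.map_map,
    ← Multiset.map_add, ← Multiset.map_add, cells_multiset_eq]

lemma card_transpose (lam : YoungDiagram) : lam.transpose.card = lam.card := by
  show lam.transpose.cells.card = lam.cells.card
  rw [Finset.card, Finset.card, transpose_cells_val, Multiset.card_map]

/-- transpose as an equivalence -/
def transposeEquiv : YoungDiagram ≃ YoungDiagram where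
  toFun := YoungDiagram.transpose
  invFun := YoungDiagram.transpose
  left_inv := YoungDiagram.transpose_transpose
  right_inv := YoungDiagram.transpose_transpose

end ZInstAux

/-- The Nekrasov factor satisfies the transpose symmetry
`N_{λ,μ}(u; q₁, q₂) = N_{λ',μ'}(u; q₂, q₁)`; consequently the level-0 instanton sum
is symmetric in `q₁` and `q₂` as a formal power series in `z`. -/
theorem zInst_q_symm (u q₁ q₂ : ℂ) (hu : u ≠ 0) (hq₁ : q₁ ≠ 0) (hq₂ : q₂ ≠ 0) :
    (∀ lam mu : YoungDiagram,
        nekrasovFactor u q₁ q₂ lam mu =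
          nekrasovFactor u q₂ q₁ lam.transpose mu.transpose) ∧
      ∀ N : ℕ, zInstCoeff u q₁ q₂ N = zInstCoeff u q₂ q₁ N := by
  constructor
  · intro lam mu
    exact ZInstAux.nek_transpose u q₁ q₂ lam mu
  · intro N
    rw [zInstCoeff, zInstCoeff]
    rw [← Equiv.tsum_eq (ZInstAux.transposeEquiv.prodCongr ZInstAux.transposeEquiv)
      (fun P : YoungDiagram × YoungDiagram =>
        if P.1.card + P.2.card = N then
          (q₂⁻¹ * q₁⁻¹) ^ N /
            (nekrasovFactor 1 q₂ q₁ P.1 P.1 * nekrasovFactor u q₂ q₁ P.1 P.2 *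
              nekrasovFactor u⁻¹ q₂ q₁ P.2 P.1 * nekrasovFactor 1 q₂ q₁ P.2 P.2)
        else 0)]
    apply tsum_congr
    intro P
    simp only [Equiv.prodCongr_apply, Prod.map]
    show (if P.1.card + P.2.card = N then _ else 0) =
      (if (ZInstAux.transposeEquiv P.1).card + (ZInstAux.transposeEquiv P.2).card = N
        then _ else 0)
    have hc1 : (ZInstAux.transposeEquiv P.1).card = P.1.card := ZInstAux.card_transpose P.1
    have hc2 : (ZInstAux.transposeEquiv P.2).card = P.2.card := ZInstAux.card_transpose P.2
    rw [hc1, hc2]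
    by_cases h : P.1.card + P.2.card = N
    · rw [if_pos h, if_pos h]
      have e1 : nekrasovFactor 1 q₁ q₂ P.1 P.1 = nekrasovFactor 1 q₂ q₁
          (ZInstAux.transposeEquiv P.1) (ZInstAux.transposeEquiv P.1) :=
        ZInstAux.nek_transpose 1 q₁ q₂ P.1 P.1
      have e2 : nekrasovFactor u q₁ q₂ P.1 P.2 = nekrasovFactor u q₂ q₁
          (ZInstAux.transposeEquiv P.1) (ZInstAux.transposeEquiv P.2) :=
        ZInstAux.nek_transpose u q₁ q₂ P.1 P.2
      have e3 : nekrasovFactor u⁻¹ q₁ q₂ P.2 P.1 = nekrasovFactor u⁻¹ q₂ q₁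
          (ZInstAux.transposeEquiv P.2) (ZInstAux.transposeEquiv P.1) :=
        ZInstAux.nek_transpose u⁻¹ q₁ q₂ P.2 P.1
      have e4 : nekrasovFactor 1 q₁ q₂ P.2 P.2 = nekrasovFactor 1 q₂ q₁
          (ZInstAux.transposeEquiv P.2) (ZInstAux.transposeEquiv P.2) :=
        ZInstAux.nek_transpose 1 q₁ q₂ P.2 P.2
      show (q₁⁻¹ * q₂⁻¹) ^ N / _ = (q₂⁻¹ * q₁⁻¹) ^ N / _
      rw [mul_comm q₁⁻¹ q₂⁻¹]
      rw [← e1, ← e2, ← e3, ← e4]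
    · rw [if_neg h, if_neg h]
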